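/- Theorem 2 (the parent minimizes the expected squared centered difference of voltage-magnitude deviations among non-descendants): let a be a non-root node whose parent b is also a non-root node. Then for every non-root node c that is not a descendant of a and with c ≠ b, one has W_ε(a,b) < W_ε(a,c); that is, b = argmin over non-root non-descendants c of a of W_ε(a,c). -/

import Mathlib

open Finset
open Classical

/-- A finite rooted tree, encoded by its root and parent map: every node reaches
the root by iterating `parent`, and the root is a fixed point of `parent`.
Each non-root node `v` is identified with the edge `(v, parent v)`, so that
edge weights are functions on non-root nodes. -/
structure DistTree (V : Type) [Fintype V] [DecidableEq V] where
  root : V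
  parent : V → V
  parent_root : parent root = root
  reaches_root : ∀ v : V, ∃ n : ℕ, parent^[n] v = root

namespace DistTree

variable {V : Type} [Fintype V] [DecidableEq V]

/-- `a` is a descendant of `b` (i.e. `a ∈ D_b`): `b` lies on the path from `a`
to the root.  Every node is a descendant of itself. -/
def Desc (T : DistTree V) (a b : V) : Prop := ∃ n : ℕ, T.parent^[n] a = b

/-- `b` is the parent of the (non-root) node `a`: `(a,b)` is an edge of the tree
and `b` lies on the path from `a` to the root. -/
def IsParent (T : DistTree V) (b a : V) : Prop := a ≠ T.root ∧ T.parent a = b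

/-- `T.pathSum w a b = Σ_{e ∈ P(a) ∩ P(b)} w_e` : the sum of the edge weights `w`
over the edges common to the path from `a` to the root and the path from `b` to
the root.  An edge `(v, parent v)` (indexed by the non-root node `v`) lies on
`P(a)` iff `a` is a descendant of `v`. -/
noncomputable def pathSum (T : DistTree V) (w : V → ℝ) (a b : V) : ℝ :=
  ∑ v : V, if v ≠ T.root ∧ T.Desc a v ∧ T.Desc b v then w v else 0

end DistTree

namespace DistTree

variable {V : Type} [Fintype V] [DecidableEq V] (T : DistTree V)

lemma root_iterate (n : ℕ) : T.parent^[n] T.root = T.root := by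
  induction n with
  | zero => rfl
  | succ n ih => rw [Function.iterate_succ_apply', ih, T.parent_root]

lemma eq_root_of_cycle {v : V} {n : ℕ} (hn : 0 < n) (h : T.parent^[n] v = v) :
    v = T.root := by
  obtain ⟨m, hm⟩ := T.reaches_root v
  have hcyc : ∀ k, T.parent^[n * k] v = v := by
    intro k
    induction k with
    | zero => rfl
    | succ k ih => rw [Nat.mul_succ, Function.iterate_add_apply, h, ih]
  have hge : m ≤ n * (m + 1) := by nlinarith
  have key : T.parent^[n * (m + 1) - m] (T.parent^[m] v) = v := by
    rw [← Function.iterate_add_apply, Nat.sub_add_cancel hge]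
    exact hcyc (m + 1)
  rw [hm, T.root_iterate] at key
  exact key.symm

lemma desc_refl (a : V) : T.Desc a a := ⟨0, rfl⟩

lemma desc_trans {a b c : V} (h1 : T.Desc a b) (h2 : T.Desc b c) : T.Desc a c := by
  obtain ⟨m, hm⟩ := h1; obtain ⟨k, hk⟩ := h2
  exact ⟨k + m, by rw [Function.iterate_add_apply, hm, hk]⟩

lemma desc_antisymm {a b : V} (h1 : T.Desc a b) (h2 : T.Desc b a) : a = b := by
  obtain ⟨m, hm⟩ := h1; obtain ⟨k, hk⟩ := h2
  rcases Nat.eq_zero_or_pos m with h0 | hpos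
  · subst h0; exact hm
  · have hcyc : T.parent^[k + m] a = a := by
      rw [Function.iterate_add_apply, hm, hk]
    have ha : a = T.root := T.eq_root_of_cycle (by omega) hcyc
    subst ha
    rw [T.root_iterate] at hm
    exact hm

lemma desc_comparable {d u v : V} (h1 : T.Desc d u) (h2 : T.Desc d v) :
    T.Desc u v ∨ T.Desc v u := by
  obtain ⟨m, hm⟩ := h1; obtain ⟨k, hk⟩ := h2
  rcases le_total m k with h | h
  · exact Or.inl ⟨k - m, by
      rw [← hm, ← Function.iterate_add_apply, Nat.sub_add_cancel h]; exact hk⟩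
  · exact Or.inr ⟨m - k, by
      rw [← hk, ← Function.iterate_add_apply, Nat.sub_add_cancel h]; exact hm⟩

lemma desc_parent_iff {a v : V} :
    T.Desc a v ↔ v = a ∨ T.Desc (T.parent a) v := by
  constructor
  · rintro ⟨m, hm⟩
    cases m with
    | zero => exact Or.inl hm.symm
    | succ m => exact Or.inr ⟨m, by rw [← Function.iterate_succ_apply]; exact hm⟩
  · rintro (rfl | ⟨m, hm⟩)
    · exact ⟨0, rfl⟩
    · exact ⟨m + 1, by rw [Function.iterate_succ_apply]; exact hm⟩

lemma not_desc_parent_self {a : V} (ha : a ≠ T.root) : ¬ T.Desc (T.parent a) a := by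
  rintro ⟨m, hm⟩
  exact ha (T.eq_root_of_cycle (Nat.succ_pos m)
    (by rw [Function.iterate_succ_apply]; exact hm))

lemma ne_parent {a : V} (ha : a ≠ T.root) : a ≠ T.parent a := by
  intro h
  exact ha (T.eq_root_of_cycle Nat.one_pos (by simpa using h.symm))

lemma pathSum_parent_sub (w : V → ℝ) {a b : V} (hab : T.IsParent b a) (d : V) :
    T.pathSum w a d - T.pathSum w b d = if T.Desc d a then w a else 0 := by
  obtain ⟨ha, hpar⟩ := hab
  have hnb : ¬ T.Desc b a := hpar ▸ T.not_desc_parent_self ha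
  unfold pathSum
  rw [← Finset.sum_sub_distrib]
  have key : ∀ v : V, ((if v ≠ T.root ∧ T.Desc a v ∧ T.Desc d v then w v else 0)
      - (if v ≠ T.root ∧ T.Desc b v ∧ T.Desc d v then w v else 0))
      = if v = a then (if T.Desc d a then w v else 0) else 0 := by
    intro v
    by_cases hva : v = a
    · subst hva
      rw [if_pos rfl]
      have h2 : ¬ (v ≠ T.root ∧ T.Desc b v ∧ T.Desc d v) := fun h => hnb h.2.1
      rw [if_neg h2, sub_zero]
      by_cases hd : T.Desc d v
      · rw [if_pos ⟨ha, T.desc_refl v, hd⟩, if_pos hd]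
      · rw [if_neg (fun h => hd h.2.2), if_neg hd]
    · rw [if_neg hva]
      have hiff : T.Desc a v ↔ T.Desc b v := by
        rw [T.desc_parent_iff (a := a), hpar]
        simp [hva]
      simp only [hiff, sub_self]
  rw [Finset.sum_congr rfl (fun v _ => key v)]
  simp

/-- The edges that lie on `P(d)`, on `P(a)`, but not on `P(c)`. -/
noncomputable def Aset (T : DistTree V) (a c d : V) : Finset V :=
  univ.filter (fun v => v ≠ T.root ∧ T.Desc d v ∧ T.Desc a v ∧ ¬ T.Desc c v)

lemma mem_aset {a c d v : V} :
    v ∈ T.Aset a c d ↔ v ≠ T.root ∧ T.Desc d v ∧ T.Desc a v ∧ ¬ T.Desc c v := by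
  simp [Aset]

lemma pathSum_sub_general (w : V → ℝ) (a c d : V) :
    T.pathSum w a d - T.pathSum w c d
      = (∑ v ∈ T.Aset a c d, w v) - ∑ v ∈ T.Aset c a d, w v := by
  unfold pathSum Aset
  rw [Finset.sum_filter, Finset.sum_filter, ← Finset.sum_sub_distrib,
    ← Finset.sum_sub_distrib]
  refine Finset.sum_congr rfl (fun v _ => ?_)
  by_cases h1 : v = T.root
  · simp [h1]
  by_cases h2 : T.Desc d v
  · by_cases h3 : T.Desc a v <;> by_cases h4 : T.Desc c v <;>
      simp [h1, h2, h3, h4]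
  · simp [h1, h2]

lemma aset_empty_or (a c d : V) : T.Aset a c d = ∅ ∨ T.Aset c a d = ∅ := by
  by_contra h
  push_neg at h
  obtain ⟨hA, hC⟩ := h
  obtain ⟨u, hu⟩ := hA
  obtain ⟨v, hv⟩ := hC
  rw [T.mem_aset] at hu hv
  obtain ⟨-, hdu, hau, hcu⟩ := hu
  obtain ⟨-, hdv, hcv, hav⟩ := hv
  rcases T.desc_comparable hdu hdv with h | h
  · exact hav (T.desc_trans hau h)
  · exact hcu (T.desc_trans hcv h)

lemma aset_empty_of_desc {a c d : V} (hnd : ¬ T.Desc c a) (hda : T.Desc d a) :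
    T.Aset c a d = ∅ := by
  rw [Finset.eq_empty_iff_forall_notMem]
  intro v hv
  rw [T.mem_aset] at hv
  obtain ⟨-, hdv, hcv, hav⟩ := hv
  rcases T.desc_comparable hda hdv with h | h
  · exact hav h
  · exact hnd (T.desc_trans hcv h)

lemma aset_sum_nonneg {w : V → ℝ} (hw : ∀ v, v ≠ T.root → 0 < w v) (a c d : V) :
    0 ≤ ∑ v ∈ T.Aset a c d, w v :=
  Finset.sum_nonneg (fun v hv => (hw v ((T.mem_aset.mp hv).1)).le)

end DistTree

/-- `W_ε(a,b) := Σ_{c ≠ 0} [(R(a,c)−R(b,c))² σp(c) + (X(a,c)−X(b,c))² σq(c)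
+ 2 (R(a,c)−R(b,c)) (X(a,c)−X(b,c)) σpq(c)]`: the expected squared centered
difference of voltage-magnitude deviations between `a` and `b` (LC-PF model). -/
noncomputable def Weps {V : Type} [Fintype V] [DecidableEq V]
    (T : DistTree V) (r x σp σq σpq : V → ℝ) (a b : V) : ℝ :=
  ∑ c : V, if c ≠ T.root then
      (T.pathSum r a c - T.pathSum r b c) ^ 2 * σp c
        + (T.pathSum x a c - T.pathSum x b c) ^ 2 * σq c
        + 2 * (T.pathSum r a c - T.pathSum r b c)
            * (T.pathSum x a c - T.pathSum x b c) * σpq c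
    else 0

/-- `W_θ(a,b) := Σ_{c ≠ 0} [(X(a,c)−X(b,c))² σp(c) + (R(a,c)−R(b,c))² σq(c)
− 2 (R(a,c)−R(b,c)) (X(a,c)−X(b,c)) σpq(c)]`: the expected squared centered
difference of voltage phase angles between `a` and `b` (LC-PF model). -/
noncomputable def Wtheta {V : Type} [Fintype V] [DecidableEq V]
    (T : DistTree V) (r x σp σq σpq : V → ℝ) (a b : V) : ℝ :=
  ∑ c : V, if c ≠ T.root then
      (T.pathSum x a c - T.pathSum x b c) ^ 2 * σp c
        + (T.pathSum r a c - T.pathSum r b c) ^ 2 * σq c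
        - 2 * (T.pathSum r a c - T.pathSum r b c)
            * (T.pathSum x a c - T.pathSum x b c) * σpq c
    else 0

/-- `W_{εθ}(a,b) := Σ_{c ≠ 0} [(R(a,c)−R(b,c)) (X(a,c)−X(b,c)) (σp(c) − σq(c))
+ ((X(a,c)−X(b,c))² − (R(a,c)−R(b,c))²) σpq(c)]`: the expected product of the
centered differences of voltage-magnitude deviations and phase angles between
`a` and `b` (LC-PF model). -/
noncomputable def WepsTheta {V : Type} [Fintype V] [DecidableEq V]
    (T : DistTree V) (r x σp σq σpq : V → ℝ) (a b : V) : ℝ :=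
  ∑ c : V, if c ≠ T.root then
      (T.pathSum r a c - T.pathSum r b c) * (T.pathSum x a c - T.pathSum x b c)
          * (σp c - σq c)
        + ((T.pathSum x a c - T.pathSum x b c) ^ 2
            - (T.pathSum r a c - T.pathSum r b c) ^ 2) * σpq c
    else 0

/-- **Theorem 2.** The parent minimizes the expected squared
centered difference of voltage-magnitude deviations among non-descendants: if
`a` is a non-root node whose parent `b` is also non-root, then for every
non-root node `c` that is not a descendant of `a` and with `c ≠ b`, one has
`W_ε(a,b) < W_ε(a,c)`. -/
theorem Weps_parent_is_argmin {V : Type} [Fintype V] [DecidableEq V]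
    (T : DistTree V) (r x σp σq σpq : V → ℝ)
    (hr : ∀ v, v ≠ T.root → 0 < r v) (hx : ∀ v, v ≠ T.root → 0 < x v)
    (hσp : ∀ v, v ≠ T.root → 0 < σp v) (hσq : ∀ v, v ≠ T.root → 0 < σq v)
    (hσpq : ∀ v, v ≠ T.root → 0 < σpq v)
    (a b : V) (hab : T.IsParent b a) (hb : b ≠ T.root)
    (c : V) (hc : c ≠ T.root) (hnd : ¬ T.Desc c a) (hcb : c ≠ b) :
    Weps T r x σp σq σpq a b < Weps T r x σp σq σpq a c := by
  obtain ⟨haroot, hpar⟩ := hab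
  have hab' : T.IsParent b a := ⟨haroot, hpar⟩
  have hanb : a ≠ b := by rw [← hpar]; exact T.ne_parent haroot
  have hdab : T.Desc a b := ⟨1, by simpa using hpar⟩
  unfold Weps
  refine Finset.sum_lt_sum ?_ ?_
  · -- termwise inequality
    intro d _
    by_cases hdroot : d = T.root
    · simp [hdroot]
    rw [if_pos hdroot, if_pos hdroot,
      T.pathSum_parent_sub r hab' d, T.pathSum_parent_sub x hab' d]
    by_cases hda : T.Desc d a
    · rw [if_pos hda, if_pos hda]
      have hCd := T.aset_empty_of_desc hnd hda
      have haA : a ∈ T.Aset a c d :=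
        T.mem_aset.mpr ⟨haroot, hda, T.desc_refl a, hnd⟩
      have hur : r a ≤ T.pathSum r a d - T.pathSum r c d := by
        rw [T.pathSum_sub_general r a c d, hCd]
        simp only [Finset.sum_empty, sub_zero]
        exact Finset.single_le_sum
          (fun i hi => (hr i ((T.mem_aset.mp hi).1)).le) haA
      have hux : x a ≤ T.pathSum x a d - T.pathSum x c d := by
        rw [T.pathSum_sub_general x a c d, hCd]
        simp only [Finset.sum_empty, sub_zero]
        exact Finset.single_le_sum
          (fun i hi => (hx i ((T.mem_aset.mp hi).1)).le) haA
      have hra := hr a haroot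
      have hxa := hx a haroot
      have hp := hσp d hdroot
      have hq := hσq d hdroot
      have hpq := hσpq d hdroot
      have h1 : (r a) ^ 2 ≤ (T.pathSum r a d - T.pathSum r c d) ^ 2 := by nlinarith
      have h2 : (x a) ^ 2 ≤ (T.pathSum x a d - T.pathSum x c d) ^ 2 := by nlinarith
      have h3 : r a * x a
          ≤ (T.pathSum r a d - T.pathSum r c d)
            * (T.pathSum x a d - T.pathSum x c d) := by nlinarith
      nlinarith [mul_le_mul_of_nonneg_right h1 hp.le,
        mul_le_mul_of_nonneg_right h2 hq.le,
        mul_le_mul_of_nonneg_right h3 hpq.le]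
    · rw [if_neg hda, if_neg hda]
      have hur := T.pathSum_sub_general r a c d
      have hux := T.pathSum_sub_general x a c d
      have hsign : (0 ≤ T.pathSum r a d - T.pathSum r c d
            ∧ 0 ≤ T.pathSum x a d - T.pathSum x c d)
          ∨ (T.pathSum r a d - T.pathSum r c d ≤ 0
            ∧ T.pathSum x a d - T.pathSum x c d ≤ 0) := by
        rcases T.aset_empty_or a c d with h | h
        · right
          rw [hur, hux, h]
          constructor <;> simp only [Finset.sum_empty, zero_sub, neg_nonpos]
          · exact T.aset_sum_nonneg hr c a d
          · exact T.aset_sum_nonneg hx c a d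
        · left
          rw [hur, hux, h]
          constructor <;> simp only [Finset.sum_empty, sub_zero]
          · exact T.aset_sum_nonneg hr a c d
          · exact T.aset_sum_nonneg hx a c d
      have huv : 0 ≤ (T.pathSum r a d - T.pathSum r c d)
          * (T.pathSum x a d - T.pathSum x c d) := by
        rcases hsign with ⟨h1, h2⟩ | ⟨h1, h2⟩
        · exact mul_nonneg h1 h2
        · nlinarith
      have hp := hσp d hdroot
      have hq := hσq d hdroot
      have hpq := hσpq d hdroot
      nlinarith [mul_nonneg huv hpq.le,
        mul_nonneg (sq_nonneg (T.pathSum r a d - T.pathSum r c d)) hp.le,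
        mul_nonneg (sq_nonneg (T.pathSum x a d - T.pathSum x c d)) hq.le]
  · -- one strict term
    by_cases hex : ∃ v, v ≠ T.root ∧ T.Desc a v ∧ ¬ T.Desc c v ∧ v ≠ a
    · -- strict at d = a
      obtain ⟨v0, hv0root, hv0a, hv0c, hv0ne⟩ := hex
      refine ⟨a, Finset.mem_univ a, ?_⟩
      rw [if_pos haroot, if_pos haroot,
        T.pathSum_parent_sub r hab' a, T.pathSum_parent_sub x hab' a,
        if_pos (T.desc_refl a), if_pos (T.desc_refl a)]
      have hCd := T.aset_empty_of_desc hnd (T.desc_refl a)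
      have hsub : ({a, v0} : Finset V) ⊆ T.Aset a c a := by
        intro i hi
        simp only [Finset.mem_insert, Finset.mem_singleton] at hi
        rcases hi with rfl | rfl
        · exact T.mem_aset.mpr ⟨haroot, T.desc_refl i, T.desc_refl i, hnd⟩
        · exact T.mem_aset.mpr ⟨hv0root, hv0a, hv0a, hv0c⟩
      have hav0 : a ≠ v0 := Ne.symm hv0ne
      have hur : r a + r v0 ≤ T.pathSum r a a - T.pathSum r c a := by
        rw [T.pathSum_sub_general r a c a, hCd]
        simp only [Finset.sum_empty, sub_zero]
        calc r a + r v0 = ∑ v ∈ ({a, v0} : Finset V), r v :=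
              (Finset.sum_pair hav0).symm
          _ ≤ _ := Finset.sum_le_sum_of_subset_of_nonneg hsub
              (fun i hi _ => (hr i ((T.mem_aset.mp hi).1)).le)
      have hux : x a + x v0 ≤ T.pathSum x a a - T.pathSum x c a := by
        rw [T.pathSum_sub_general x a c a, hCd]
        simp only [Finset.sum_empty, sub_zero]
        calc x a + x v0 = ∑ v ∈ ({a, v0} : Finset V), x v :=
              (Finset.sum_pair hav0).symm
          _ ≤ _ := Finset.sum_le_sum_of_subset_of_nonneg hsub
              (fun i hi _ => (hx i ((T.mem_aset.mp hi).1)).le)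
      have hra := hr a haroot
      have hxa := hx a haroot
      have hrv0 := hr v0 hv0root
      have hxv0 := hx v0 hv0root
      have hp := hσp a haroot
      have hq := hσq a haroot
      have hpq := hσpq a haroot
      have h1 : (r a) ^ 2 < (T.pathSum r a a - T.pathSum r c a) ^ 2 := by nlinarith
      have h2 : (x a) ^ 2 < (T.pathSum x a a - T.pathSum x c a) ^ 2 := by nlinarith
      have h3 : r a * x a
          < (T.pathSum r a a - T.pathSum r c a)
            * (T.pathSum x a a - T.pathSum x c a) := by nlinarith
      nlinarith [mul_lt_mul_of_pos_right h1 hp,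
        mul_lt_mul_of_pos_right h2 hq,
        mul_lt_mul_of_pos_right h3 hpq]
    · -- strict at d = c
      push_neg at hex
      have hcbdesc : T.Desc c b := by
        by_contra h
        exact hanb ((hex b hb hdab h).symm)
      have hnac : ¬ T.Desc a c := by
        rintro ⟨m, hm⟩
        cases m with
        | zero =>
            have hac : a = c := hm
            subst hac
            exact hnd (T.desc_refl a)
        | succ m =>
            have hbc : T.Desc b c :=
              ⟨m, by rw [← hpar, ← Function.iterate_succ_apply]; exact hm⟩
            exact hcb (T.desc_antisymm hcbdesc hbc)
      refine ⟨c, Finset.mem_univ c, ?_⟩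
      rw [if_pos hc, if_pos hc,
        T.pathSum_parent_sub r hab' c, T.pathSum_parent_sub x hab' c,
        if_neg hnd, if_neg hnd]
      have hAc : T.Aset a c c = ∅ := by
        rw [Finset.eq_empty_iff_forall_notMem]
        intro v hv
        obtain ⟨-, h1, -, h2⟩ := T.mem_aset.mp hv
        exact h2 h1
      have hcC : c ∈ T.Aset c a c :=
        T.mem_aset.mpr ⟨hc, T.desc_refl c, T.desc_refl c, hnac⟩
      have hur : T.pathSum r a c - T.pathSum r c c ≤ - r c := by
        rw [T.pathSum_sub_general r a c c, hAc]
        simp only [Finset.sum_empty, zero_sub, neg_le_neg_iff]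
        exact Finset.single_le_sum
          (fun i hi => (hr i ((T.mem_aset.mp hi).1)).le) hcC
      have hux : T.pathSum x a c - T.pathSum x c c ≤ - x c := by
        rw [T.pathSum_sub_general x a c c, hAc]
        simp only [Finset.sum_empty, zero_sub, neg_le_neg_iff]
        exact Finset.single_le_sum
          (fun i hi => (hx i ((T.mem_aset.mp hi).1)).le) hcC
      have hu0 : T.pathSum r a c - T.pathSum r c c < 0 := by
        have := hr c hc; linarith
      have hv0 : T.pathSum x a c - T.pathSum x c c < 0 := by
        have := hx c hc; linarith
      have hp := hσp c hc
      have hq := hσq c hc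
      have hpq := hσpq c hc
      have huv : 0 < (T.pathSum r a c - T.pathSum r c c)
          * (T.pathSum x a c - T.pathSum x c c) := by nlinarith
      have huu : 0 < (T.pathSum r a c - T.pathSum r c c)
          * (T.pathSum r a c - T.pathSum r c c) := by nlinarith
      have hvv : 0 < (T.pathSum x a c - T.pathSum x c c)
          * (T.pathSum x a c - T.pathSum x c c) := by nlinarith
      nlinarith [mul_pos huv hpq, mul_pos huu hp, mul_pos hvv hq]
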